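/- The random incompatibility robustness equals the maximal random steering robustness within the SEO class: for every measurement assemblage {B_{a|x}} with |A| outcomes per setting and every full-rank density matrix ρ, SR^R(ρ^{1/2} B ρ^{1/2}) = IR^R(B). -/

import Mathlib

open Matrix Kronecker BigOperators ComplexOrder

noncomputable section

/-- A density matrix: positive semidefinite with unit trace. -/
def IsDensity {d : ℕ} (ρ : Matrix (Fin d) (Fin d) ℂ) : Prop :=
  ρ.PosSemidef ∧ ρ.trace = 1

/-- A POVM: positive semidefinite effects summing to the identity. -/
def IsPOVM {d nl : ℕ} (G : Fin nl → Matrix (Fin d) (Fin d) ℂ) : Prop :=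
  (∀ l, (G l).PosSemidef) ∧ ∑ l, G l = 1

/-- A measurement assemblage: for each setting `x`, a POVM `a ↦ M x a`. -/
def IsMA {d na nx : ℕ} (M : Fin nx → Fin na → Matrix (Fin d) (Fin d) ℂ) : Prop :=
  (∀ x a, (M x a).PosSemidef) ∧ ∀ x, ∑ a, M x a = 1

/-- Joint measurability: `M x a = ∑ λ p(a|x,λ) G λ` for a parent POVM `G`. -/
def JM {d na nx : ℕ} (M : Fin nx → Fin na → Matrix (Fin d) (Fin d) ℂ) : Prop :=
  ∃ (nl : ℕ) (G : Fin nl → Matrix (Fin d) (Fin d) ℂ)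
    (p : Fin nx → Fin na → Fin nl → ℝ),
    IsPOVM G ∧ (∀ x a l, 0 ≤ p x a l) ∧ (∀ x l, ∑ a, p x a l = 1) ∧
    ∀ x a, M x a = ∑ l, (p x a l : ℂ) • G l

/-- A state assemblage: PSD elements with an `x`-independent reduced density matrix. -/
def IsSA {d na nx : ℕ} (σ : Fin nx → Fin na → Matrix (Fin d) (Fin d) ℂ) : Prop :=
  (∀ x a, (σ x a).PosSemidef) ∧
  ∃ ρ : Matrix (Fin d) (Fin d) ℂ, IsDensity ρ ∧ ∀ x, ∑ a, σ x a = ρ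

/-- Local-hidden-state model: `σ x a = ∑ λ q(λ) p(a|x,λ) ρ_λ`. -/
def LHS {d na nx : ℕ} (σ : Fin nx → Fin na → Matrix (Fin d) (Fin d) ℂ) : Prop :=
  ∃ (nl : ℕ) (q : Fin nl → ℝ) (p : Fin nx → Fin na → Fin nl → ℝ)
    (ρ : Fin nl → Matrix (Fin d) (Fin d) ℂ),
    (∀ l, 0 ≤ q l) ∧ (∑ l, q l = 1) ∧
    (∀ x a l, 0 ≤ p x a l) ∧ (∀ x l, ∑ a, p x a l = 1) ∧
    (∀ l, IsDensity (ρ l)) ∧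
    ∀ x a, σ x a = ∑ l, ((q l * p x a l : ℝ) : ℂ) • ρ l

/-- Incompatibility robustness. -/
def IR {d na nx : ℕ} (B : Fin nx → Fin na → Matrix (Fin d) (Fin d) ℂ) : ℝ :=
  sInf {t : ℝ | 0 ≤ t ∧ ∃ N, IsMA N ∧
    JM (fun x a => (((1 + t : ℝ))⁻¹ : ℂ) • (B x a + (t : ℂ) • N x a))}

/-- Steering robustness. -/
def SR {d na nx : ℕ} (σ : Fin nx → Fin na → Matrix (Fin d) (Fin d) ℂ) : ℝ :=
  sInf {t : ℝ | 0 ≤ t ∧ ∃ ξ, IsSA ξ ∧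
    LHS (fun x a => (((1 + t : ℝ))⁻¹ : ℂ) • (σ x a + (t : ℂ) • ξ x a))}

/-- Incompatible weight. -/
def IW {d na nx : ℕ} (B : Fin nx → Fin na → Matrix (Fin d) (Fin d) ℂ) : ℝ :=
  sInf {t : ℝ | 0 ≤ t ∧ t ≤ 1 ∧ ∃ N O, IsMA N ∧ JM O ∧
    ∀ x a, B x a = (t : ℂ) • N x a + ((1 - t : ℝ) : ℂ) • O x a}

/-- Steerable weight. -/
def SW {d na nx : ℕ} (σ : Fin nx → Fin na → Matrix (Fin d) (Fin d) ℂ) : ℝ :=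
  sInf {t : ℝ | 0 ≤ t ∧ t ≤ 1 ∧ ∃ ξ τ, IsSA ξ ∧ LHS τ ∧
    ∀ x a, σ x a = (t : ℂ) • ξ x a + ((1 - t : ℝ) : ℂ) • τ x a}

/-- Positive map on matrices. -/
def PosMap {d : ℕ} (E : Matrix (Fin d) (Fin d) ℂ →ₗ[ℂ] Matrix (Fin d) (Fin d) ℂ) : Prop :=
  ∀ X, X.PosSemidef → (E X).PosSemidef

/-- Trace-nonincreasing on PSD matrices. -/
def TNI {d : ℕ} (E : Matrix (Fin d) (Fin d) ℂ →ₗ[ℂ] Matrix (Fin d) (Fin d) ℂ) : Prop :=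
  ∀ X : Matrix (Fin d) (Fin d) ℂ, X.PosSemidef → (E X).trace.re ≤ X.trace.re

/-- `Ed` is the Hilbert–Schmidt adjoint of `E`. -/
def IsAdjoint {d : ℕ} (E Ed : Matrix (Fin d) (Fin d) ℂ →ₗ[ℂ] Matrix (Fin d) (Fin d) ℂ) : Prop :=
  ∀ X Y, ((E X)ᴴ * Y).trace = (Xᴴ * (Ed Y)).trace

/-- Partial trace over the first tensor factor. -/
def ptraceA {d d' : ℕ} (M : Matrix (Fin d × Fin d') (Fin d × Fin d') ℂ) :
    Matrix (Fin d') (Fin d') ℂ :=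
  Matrix.of fun i j => ∑ k : Fin d, M (k, i) (k, j)

/-- The map `E ⊗ id` acting on bipartite matrices. -/
def tensId {d d' : ℕ} (E : Matrix (Fin d) (Fin d) ℂ →ₗ[ℂ] Matrix (Fin d) (Fin d) ℂ)
    (M : Matrix (Fin d × Fin d') (Fin d × Fin d') ℂ) :
    Matrix (Fin d × Fin d') (Fin d × Fin d') ℂ :=
  Matrix.of fun p q => E (Matrix.of fun i k => M (i, p.2) (k, q.2)) p.1 q.1

/-- Random incompatibility robustness: noise is the trivial assemblage `I/|A|`. -/
def IRR {d na nx : ℕ} (B : Fin nx → Fin na → Matrix (Fin d) (Fin d) ℂ) : ℝ :=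
  sInf {t : ℝ | 0 ≤ t ∧
    JM (fun x a => (((1 + t : ℝ))⁻¹ : ℂ) •
      (B x a + (t : ℂ) • (((na : ℝ)⁻¹ : ℝ) : ℂ) • (1 : Matrix (Fin d) (Fin d) ℂ)))}

/-- Random steering robustness: noise is `ρ_B/|A|` with `ρ_B` the reduced state. -/
def SRR {d na nx : ℕ} (σ : Fin nx → Fin na → Matrix (Fin d) (Fin d) ℂ) : ℝ :=
  sInf {t : ℝ | 0 ≤ t ∧
    LHS (fun x a => (((1 + t : ℝ))⁻¹ : ℂ) •
      (σ x a + (t : ℂ) • (((na : ℝ)⁻¹ : ℝ) : ℂ) • ∑ b, σ x b))}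

/-- The square root of a positive semidefinite matrix (removed from Mathlib; old definition). -/
def Matrix.PosSemidef.sqrt {n 𝕜 : Type*} [Fintype n] [DecidableEq n] [RCLike 𝕜]
    {A : Matrix n n 𝕜} (hA : A.PosSemidef) : Matrix n n 𝕜 :=
  (hA.1.eigenvectorUnitary : Matrix n n 𝕜) *
    diagonal ((↑) ∘ (Real.sqrt ·) ∘ hA.1.eigenvalues) *
    (star hA.1.eigenvectorUnitary : Matrix n n 𝕜)

/-! ### Auxiliary lemmas -/

lemma Matrix.PosSemidef.posSemidef_sqrt {d : ℕ} {A : Matrix (Fin d) (Fin d) ℂ}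
    (hA : A.PosSemidef) : hA.sqrt.PosSemidef := by
  unfold Matrix.PosSemidef.sqrt
  rw [star_eq_conjTranspose]
  refine Matrix.PosSemidef.mul_mul_conjTranspose_same (Matrix.PosSemidef.diagonal ?_) _
  intro i
  simp only [Function.comp_apply, Pi.zero_apply]
  exact Complex.zero_le_real.mpr (Real.sqrt_nonneg _)

lemma Matrix.PosSemidef.sqrt_mul_self {d : ℕ} {A : Matrix (Fin d) (Fin d) ℂ}
    (hA : A.PosSemidef) : hA.sqrt * hA.sqrt = A := by
  unfold Matrix.PosSemidef.sqrt
  set U := hA.1.eigenvectorUnitary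
  have hU : (star U : Matrix (Fin d) (Fin d) ℂ) * (U : Matrix (Fin d) (Fin d) ℂ) = 1 :=
    Unitary.coe_star_mul_self U
  have hD : diagonal ((↑) ∘ (Real.sqrt ·) ∘ hA.1.eigenvalues) *
      diagonal ((↑) ∘ (Real.sqrt ·) ∘ hA.1.eigenvalues)
      = diagonal (RCLike.ofReal ∘ hA.1.eigenvalues : Fin d → ℂ) := by
    rw [diagonal_mul_diagonal]
    congr 1
    funext i
    simp only [Function.comp_apply]
    rw [← Complex.ofReal_mul, Real.mul_self_sqrt (hA.eigenvalues_nonneg i)]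
    rfl
  calc (U : Matrix (Fin d) (Fin d) ℂ) * diagonal ((↑) ∘ (Real.sqrt ·) ∘ hA.1.eigenvalues) *
        (star U : Matrix (Fin d) (Fin d) ℂ) *
        ((U : Matrix (Fin d) (Fin d) ℂ) * diagonal ((↑) ∘ (Real.sqrt ·) ∘ hA.1.eigenvalues) *
        (star U : Matrix (Fin d) (Fin d) ℂ))
      = (U : Matrix (Fin d) (Fin d) ℂ) * (diagonal ((↑) ∘ (Real.sqrt ·) ∘ hA.1.eigenvalues) *
        ((star U : Matrix (Fin d) (Fin d) ℂ) * (U : Matrix (Fin d) (Fin d) ℂ)) *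
        diagonal ((↑) ∘ (Real.sqrt ·) ∘ hA.1.eigenvalues)) *
        (star U : Matrix (Fin d) (Fin d) ℂ) := by simp only [Matrix.mul_assoc]
    _ = A := by
      rw [hU, Matrix.mul_one, hD]
      conv_rhs => rw [hA.1.spectral_theorem]
      rfl

/-- Trace facts for PSD matrices: trace is a nonnegative real, and trace zero forces zero. -/
lemma psd_trace_aux {d : ℕ} {X : Matrix (Fin d) (Fin d) ℂ} (hX : X.PosSemidef) :
    X.trace = (X.trace.re : ℂ) ∧ 0 ≤ X.trace.re ∧ (X.trace = 0 → X = 0) := by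
  obtain ⟨B, rfl⟩ : ∃ B : Matrix (Fin d) (Fin d) ℂ, X = Bᴴ * B :=
    ⟨hX.sqrt, by rw [hX.posSemidef_sqrt.1.eq, hX.sqrt_mul_self]⟩
  have key : (Bᴴ * B).trace = ((∑ i, ∑ j, Complex.normSq (B j i) : ℝ) : ℂ) := by
    push_cast
    simp only [Matrix.trace, Matrix.diag, Matrix.mul_apply, Matrix.conjTranspose_apply]
    refine Finset.sum_congr rfl fun i _ => Finset.sum_congr rfl fun j _ => ?_
    rw [Complex.normSq_eq_conj_mul_self]
    rfl
  have hnn : 0 ≤ ∑ i, ∑ j, Complex.normSq (B j i) :=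
    Finset.sum_nonneg fun i _ => Finset.sum_nonneg fun j _ => Complex.normSq_nonneg _
  refine ⟨by rw [key]; norm_num, by rw [key]; simpa using hnn, fun h => ?_⟩
  rw [key] at h
  have h0 : (∑ i, ∑ j, Complex.normSq (B j i)) = 0 := by exact_mod_cast h
  have hB0 : B = 0 := by
    ext j i
    have h1 := (Finset.sum_eq_zero_iff_of_nonneg
      (fun i _ => Finset.sum_nonneg fun j _ => Complex.normSq_nonneg _)).mp h0 i (by simp)
    have h2 := (Finset.sum_eq_zero_iff_of_nonneg
      (fun j _ => Complex.normSq_nonneg _)).mp h1 j (by simp)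
    simpa using Complex.normSq_eq_zero.mp h2
  rw [hB0]; simp

/-- Nonnegative real scalar multiples of PSD matrices are PSD. -/
lemma psd_smul_nonneg {d : ℕ} {X : Matrix (Fin d) (Fin d) ℂ} {c : ℝ} (hc : 0 ≤ c)
    (hX : X.PosSemidef) : ((c : ℂ) • X).PosSemidef := by
  refine Matrix.PosSemidef.of_dotProduct_mulVec_nonneg ?_ fun x => ?_
  · simp only [Matrix.IsHermitian, Matrix.conjTranspose_smul, Complex.star_def,
      Complex.conj_ofReal, hX.1.eq]
  · rw [Matrix.smul_mulVec, dotProduct_smul, smul_eq_mul]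
    exact mul_nonneg (Complex.zero_le_real.mpr hc) (hX.dotProduct_mulVec_nonneg x)

/-- Conjugation by a Hermitian matrix preserves PSD. -/
lemma psd_conj {d : ℕ} {A X : Matrix (Fin d) (Fin d) ℂ} (hA : A.IsHermitian)
    (hX : X.PosSemidef) : (A * X * A).PosSemidef := by
  have := hX.conjTranspose_mul_mul_same A
  rwa [hA.eq] at this

lemma jm_to_lhs {d na nx : ℕ} (ρ : Matrix (Fin d) (Fin d) ℂ) (hρ : ρ.PosDef)
    (hρ1 : ρ.trace = 1) (M : Fin nx → Fin na → Matrix (Fin d) (Fin d) ℂ) (hJM : JM M) :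
    LHS (fun x a => hρ.posSemidef.sqrt * M x a * hρ.posSemidef.sqrt) := by
  set s := hρ.posSemidef.sqrt with hs_def
  have hs : s.PosSemidef := hρ.posSemidef.posSemidef_sqrt
  have hss : s * s = ρ := hρ.posSemidef.sqrt_mul_self
  obtain ⟨nl, G, p, hG, hp0, hp1, hM⟩ := hJM
  set T : Fin nl → Matrix (Fin d) (Fin d) ℂ := fun l => s * G l * s with hT_def
  have hT : ∀ l, (T l).PosSemidef := fun l => psd_conj hs.1 (hG.1 l)
  set q : Fin nl → ℝ := fun l => (T l).trace.re with hq_def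
  have hTtr : ∀ l, (T l).trace = ((q l : ℝ) : ℂ) := fun l => (psd_trace_aux (hT l)).1
  have hq0 : ∀ l, 0 ≤ q l := fun l => (psd_trace_aux (hT l)).2.1
  have hsumT : ∑ l, T l = ρ := by
    have : ∑ l, T l = s * (∑ l, G l) * s := by
      rw [Finset.mul_sum, Finset.sum_mul]
    rw [this, hG.2, mul_one, hss]
  have hqsum : ∑ l, q l = 1 := by
    have hc : ((∑ l, q l : ℝ) : ℂ) = 1 := by
      push_cast
      calc ∑ l, ((q l : ℝ) : ℂ) = ∑ l, (T l).trace :=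
            Finset.sum_congr rfl fun l _ => (hTtr l).symm
        _ = (∑ l, T l).trace := (Matrix.trace_sum _ _).symm
        _ = ρ.trace := by rw [hsumT]
        _ = 1 := hρ1
    exact_mod_cast hc
  set σl : Fin nl → Matrix (Fin d) (Fin d) ℂ :=
    fun l => if q l = 0 then ρ else (((q l)⁻¹ : ℝ) : ℂ) • T l with hσl_def
  have hql : ∀ l, ((q l : ℝ) : ℂ) • σl l = T l := by
    intro l
    by_cases h : q l = 0
    · have hT0 : T l = 0 := (psd_trace_aux (hT l)).2.2 (by rw [hTtr l, h]; simp)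
      simp [hσl_def, h, hT0]
    · simp only [hσl_def, if_neg h, smul_smul, ← Complex.ofReal_mul,
        mul_inv_cancel₀ h, Complex.ofReal_one, one_smul]
  have hσd : ∀ l, IsDensity (σl l) := by
    intro l
    by_cases h : q l = 0
    · simp only [hσl_def, if_pos h]
      exact ⟨hρ.posSemidef, hρ1⟩
    · simp only [hσl_def, if_neg h]
      refine ⟨psd_smul_nonneg (inv_nonneg.mpr (hq0 l)) (hT l), ?_⟩
      rw [Matrix.trace_smul, hTtr l, smul_eq_mul, ← Complex.ofReal_mul,
        inv_mul_cancel₀ h, Complex.ofReal_one]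
  refine ⟨nl, q, p, σl, hq0, hqsum, hp0, hp1, hσd, fun x a => ?_⟩
  have hstep : s * M x a * s = ∑ l, ((p x a l : ℝ) : ℂ) • T l := by
    rw [hM x a, Finset.mul_sum, Finset.sum_mul]
    refine Finset.sum_congr rfl fun l _ => ?_
    rw [Matrix.mul_smul, Matrix.smul_mul]
  show s * M x a * s = _
  rw [hstep]
  refine Finset.sum_congr rfl fun l _ => ?_
  rw [Complex.ofReal_mul, mul_comm, mul_smul, hql l]

lemma lhs_to_jm {d na nx : ℕ} (ρ : Matrix (Fin d) (Fin d) ℂ) (hρ : ρ.PosDef)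
    (hρ1 : ρ.trace = 1) (M : Fin nx → Fin na → Matrix (Fin d) (Fin d) ℂ)
    (hsum : ∀ x, ∑ a, M x a = 1) (hnx : nx ≠ 0)
    (hL : LHS (fun x a => hρ.posSemidef.sqrt * M x a * hρ.posSemidef.sqrt)) : JM M := by
  set s := hρ.posSemidef.sqrt with hs_def
  have hs : s.PosSemidef := hρ.posSemidef.posSemidef_sqrt
  have hss : s * s = ρ := hρ.posSemidef.sqrt_mul_self
  have hdet : IsUnit s.det := by
    have h2 : s.det * s.det = ρ.det := by rw [← Matrix.det_mul, hss]
    have hdρ : ρ.det ≠ 0 := hρ.det_pos.ne'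
    have hsd : s.det ≠ 0 := fun h => hdρ (by rw [← h2, h, zero_mul])
    exact isUnit_iff_ne_zero.mpr hsd
  have hinv : s⁻¹ * s = 1 := Matrix.nonsing_inv_mul s hdet
  have hinv' : s * s⁻¹ = 1 := Matrix.mul_nonsing_inv s hdet
  have hsiH : (s⁻¹).IsHermitian := hs.1.inv
  obtain ⟨nl, q, p, σl, hq0, hq1, hp0, hp1, hσd, hLe⟩ := hL
  have cancel : ∀ X : Matrix (Fin d) (Fin d) ℂ, s⁻¹ * (s * X * s) * s⁻¹ = X := by
    intro X
    calc s⁻¹ * (s * X * s) * s⁻¹ = (s⁻¹ * s) * (X * (s * s⁻¹)) := by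
          simp only [Matrix.mul_assoc]
      _ = X := by rw [hinv, hinv', Matrix.one_mul, Matrix.mul_one]
  set G : Fin nl → Matrix (Fin d) (Fin d) ℂ :=
    fun l => ((q l : ℝ) : ℂ) • (s⁻¹ * σl l * s⁻¹) with hG_def
  have key : ∑ l, ((q l : ℝ) : ℂ) • σl l = ρ := by
    set x0 : Fin nx := ⟨0, Nat.pos_of_ne_zero hnx⟩
    have h1 : ∑ a, (s * M x0 a * s) = ρ := by
      have : ∑ a, (s * M x0 a * s) = s * (∑ a, M x0 a) * s := by
        rw [Finset.mul_sum, Finset.sum_mul]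
      rw [this, hsum x0, mul_one, hss]
    have hLe' : ∀ x a, s * M x a * s = ∑ l, ((q l * p x a l : ℝ) : ℂ) • σl l := hLe
    have h2 : ∑ a, (s * M x0 a * s)
        = ∑ l, ∑ a, ((q l * p x0 a l : ℝ) : ℂ) • σl l := by
      calc ∑ a, (s * M x0 a * s) = ∑ a, ∑ l, ((q l * p x0 a l : ℝ) : ℂ) • σl l :=
            Finset.sum_congr rfl fun a _ => hLe' x0 a
        _ = _ := Finset.sum_comm
    have h3 : ∀ l, ∑ a, ((q l * p x0 a l : ℝ) : ℂ) • σl l = ((q l : ℝ) : ℂ) • σl l := by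
      intro l
      have : ∑ a, ((q l * p x0 a l : ℝ) : ℂ) • σl l
          = (∑ a, ((q l * p x0 a l : ℝ) : ℂ)) • σl l := by
        rw [Finset.sum_smul]
      rw [this]
      congr 1
      have hr : ∑ a, (q l * p x0 a l) = q l := by
        rw [← Finset.mul_sum, hp1 x0 l, mul_one]
      rw [← Complex.ofReal_sum, hr]
    calc ∑ l, ((q l : ℝ) : ℂ) • σl l = ∑ l, ∑ a, ((q l * p x0 a l : ℝ) : ℂ) • σl l :=
          Finset.sum_congr rfl fun l _ => (h3 l).symm
      _ = ∑ a, (s * M x0 a * s) := h2.symm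
      _ = ρ := h1
  refine ⟨nl, G, p, ⟨?_, ?_⟩, hp0, hp1, fun x a => ?_⟩
  · intro l
    exact psd_smul_nonneg (hq0 l) (psd_conj hsiH (hσd l).1)
  · have : ∑ l, G l = s⁻¹ * (∑ l, ((q l : ℝ) : ℂ) • σl l) * s⁻¹ := by
      rw [Finset.mul_sum, Finset.sum_mul]
      refine Finset.sum_congr rfl fun l _ => ?_
      simp only [hG_def]
      rw [Matrix.mul_smul, Matrix.smul_mul]
    rw [this, key, ← hss, show s * s = s * 1 * s by rw [Matrix.mul_one]]
    exact cancel 1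
  · have hLe' : ∀ x a, s * M x a * s = ∑ l, ((q l * p x a l : ℝ) : ℂ) • σl l := hLe
    have hMx : M x a = s⁻¹ * (s * M x a * s) * s⁻¹ := (cancel _).symm
    rw [hMx, hLe' x a, Finset.mul_sum, Finset.sum_mul]
    refine Finset.sum_congr rfl fun l _ => ?_
    simp only [hG_def]
    rw [Matrix.mul_smul, Matrix.smul_mul, smul_smul]
    congr 1
    push_cast
    ring

/-- SR^R(ρ^{1/2} B ρ^{1/2}) = IR^R(B) for every full-rank density ρ. -/
theorem srr_eq_irr {d na nx : ℕ}
    (B : Fin nx → Fin na → Matrix (Fin d) (Fin d) ℂ) (hB : IsMA B)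
    (ρ : Matrix (Fin d) (Fin d) ℂ) (hρ : ρ.PosDef) (hρ1 : ρ.trace = 1) :
    SRR (fun x a => hρ.posSemidef.sqrt * B x a * hρ.posSemidef.sqrt) = IRR B := by
  set s := hρ.posSemidef.sqrt with hs_def
  have hss : s * s = ρ := hρ.posSemidef.sqrt_mul_self
  have hfun : ∀ t : ℝ,
      (fun x a => (((1 + t : ℝ))⁻¹ : ℂ) •
        ((s * B x a * s) + (t : ℂ) • (((na : ℝ)⁻¹ : ℝ) : ℂ) • ∑ b, s * B x b * s))
      = (fun x a => s * ((((1 + t : ℝ))⁻¹ : ℂ) •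
          (B x a + (t : ℂ) • (((na : ℝ)⁻¹ : ℝ) : ℂ) • (1 : Matrix (Fin d) (Fin d) ℂ))) * s) := by
    intro t
    funext x a
    have h1 : ∑ b, s * B x b * s = ρ := by
      have : ∑ b, s * B x b * s = s * (∑ b, B x b) * s := by
        rw [Finset.mul_sum, Finset.sum_mul]
      rw [this, hB.2 x, mul_one, hss]
    rw [h1, Matrix.mul_smul, Matrix.smul_mul]
    congr 1
    rw [Matrix.mul_add, Matrix.add_mul, Matrix.mul_smul, Matrix.smul_mul,
      Matrix.mul_smul, Matrix.smul_mul, Matrix.mul_one, hss]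
  have hd : d ≠ 0 := by
    intro h
    subst h
    rw [Matrix.trace_eq_zero_of_isEmpty] at hρ1
    exact zero_ne_one hρ1
  unfold SRR IRR
  congr 1
  ext t
  simp only [Set.mem_setOf_eq]
  constructor
  · rintro ⟨ht, hL⟩
    refine ⟨ht, ?_⟩
    rw [hfun t] at hL
    by_cases hnx : nx = 0
    · subst hnx
      exact ⟨1, fun _ => 1, fun x => x.elim0, ⟨fun _ => Matrix.PosSemidef.one, by simp⟩,
        fun x => x.elim0, fun x => x.elim0, fun x => x.elim0⟩
    · have hna : na ≠ 0 := by
        intro h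
        subst h
        have h0 : (0 : Matrix (Fin d) (Fin d) ℂ) = 1 := by
          simpa using hB.2 ⟨0, Nat.pos_of_ne_zero hnx⟩
        have h00 := congrFun (congrFun h0 ⟨0, Nat.pos_of_ne_zero hd⟩) ⟨0, Nat.pos_of_ne_zero hd⟩
        simp [Matrix.one_apply] at h00
      have hsum : ∀ x, ∑ a, ((((1 + t : ℝ))⁻¹ : ℂ) •
          (B x a + (t : ℂ) • (((na : ℝ)⁻¹ : ℝ) : ℂ) • (1 : Matrix (Fin d) (Fin d) ℂ))) = 1 := by
        intro x
        rw [← Finset.smul_sum, Finset.sum_add_distrib, hB.2 x, Finset.sum_const,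
          Finset.card_univ, Fintype.card_fin, ← Nat.cast_smul_eq_nsmul ℂ na]
        have hcomb : ((na : ℕ) : ℂ) • (t : ℂ) • (((na : ℝ)⁻¹ : ℝ) : ℂ) •
            (1 : Matrix (Fin d) (Fin d) ℂ) = (t : ℂ) • 1 := by
          rw [smul_smul, smul_smul]
          congr 1
          have hna' : ((na : ℝ) : ℂ) ≠ 0 := by
            simp [Nat.cast_ne_zero, hna]
          push_cast
          field_simp
        rw [hcomb]
        rw [show (1 : Matrix (Fin d) (Fin d) ℂ) + (t : ℂ) • 1
            = ((1 + t : ℂ)) • (1 : Matrix (Fin d) (Fin d) ℂ) by rw [add_smul, one_smul],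
          smul_smul]
        have h1t : (1 + t : ℝ) ≠ 0 := by linarith
        have hfin : (((1 + t : ℝ))⁻¹ : ℂ) * (1 + (t : ℂ)) = 1 := by
          push_cast
          field_simp
        rw [hfin, one_smul]
      exact lhs_to_jm ρ hρ hρ1 _ hsum hnx hL
  · rintro ⟨ht, hJ⟩
    refine ⟨ht, ?_⟩
    rw [hfun t]
    exact jm_to_lhs ρ hρ hρ1 _ hJ
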